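/- arXiv:2210.06532 — 2 statements merged into one kernel-verified Lean document; each statement's English description precedes it below -/
import Mathlib

section
/- Assume in addition that ℓ is bounded, i.e., sup ℓ < +∞. Then for every v ∈ C_0(ℝ^d) and every integer N ≥ 2: M_∞(v) ≤ M_N(v) ≤ M_∞(v) + (1/N)(sup ℓ + sup v₊), where v₊ = max(v,0). -/
open MeasureTheory ENNReal Filter Topology
open scoped ZeroAtInfty

noncomputable section

/-- The pairwise interaction cost `c_N` on `(ℝ^d)^N`. -/
def pairCost (d : ℕ) (ℓ : ℝ → ℝ≥0∞) (N : ℕ)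
    (x : Fin N → EuclideanSpace ℝ (Fin d)) : ℝ≥0∞ :=
  (2 / ((N : ℝ≥0∞) * ((N : ℝ≥0∞) - 1))) *
    ∑ i : Fin N, ∑ j : Fin N, if i < j then ℓ (dist (x i) (x j)) else 0

/-- The set `Π_N(ρ)` of multimarginal transport plans. -/
def couplings (d : ℕ) (N : ℕ) (ρ : Measure (EuclideanSpace ℝ (Fin d))) :
    Set (Measure (Fin N → EuclideanSpace ℝ (Fin d))) :=
  {P | IsProbabilityMeasure P ∧ ∀ i : Fin N, P.map (fun x => x i) = ρ}

/-- The multimarginal optimal transport cost `C_N(ρ)`. -/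
def CN (d : ℕ) (ℓ : ℝ → ℝ≥0∞) (N : ℕ) (ρ : Measure (EuclideanSpace ℝ (Fin d))) : ℝ≥0∞ :=
  ⨅ P ∈ couplings d N ρ, ∫⁻ x, pairCost d ℓ N x ∂P

/-- `S_N v (x) = (1/N) ∑ v(x_j)`. -/
def SN (d : ℕ) (N : ℕ) (v : EuclideanSpace ℝ (Fin d) → ℝ)
    (x : Fin N → EuclideanSpace ℝ (Fin d)) : ℝ :=
  (∑ i, v (x i)) / N

/-- The dual functional `M_N(v) = sup_x (S_N v (x) - c_N(x))`, as an extended real. -/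
def MN (d : ℕ) (ℓ : ℝ → ℝ≥0∞) (N : ℕ) (v : EuclideanSpace ℝ (Fin d) → ℝ) : EReal :=
  ⨆ x : Fin N → EuclideanSpace ℝ (Fin d),
    ((SN d N v x : ℝ) : EReal) - ((pairCost d ℓ N x : ℝ≥0∞) : EReal)

/-- `M_∞(v) = inf_{N ≥ 2} M_N(v)`. -/
def Minf (d : ℕ) (ℓ : ℝ → ℝ≥0∞) (v : EuclideanSpace ℝ (Fin d) → ℝ) : EReal :=
  ⨅ N : ℕ, ⨅ _ : 2 ≤ N, MN d ℓ N v

/-- The relaxed multimarginal cost `overline{C_N}`, defined by biconjugation. -/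
def relCN (d : ℕ) (ℓ : ℝ → ℝ≥0∞) (N : ℕ)
    (ρ : Measure (EuclideanSpace ℝ (Fin d))) : EReal :=
  ⨆ v : C₀(EuclideanSpace ℝ (Fin d), ℝ),
    ((∫ x, v x ∂ρ : ℝ) : EReal) - MN d ℓ N (fun x => v x)

/-- The limit functional `C_∞`, Fenchel conjugate of `M_∞`. -/
def Cinf (d : ℕ) (ℓ : ℝ → ℝ≥0∞) (ρ : Measure (EuclideanSpace ℝ (Fin d))) : EReal :=
  ⨆ v : C₀(EuclideanSpace ℝ (Fin d), ℝ),
    ((∫ x, v x ∂ρ : ℝ) : EReal) - Minf d ℓ (fun x => v x)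

/-- The direct interaction energy `D(ρ) = ∬ ℓ(|x-y|) dρ dρ`. -/
def Denergy (d : ℕ) (ℓ : ℝ → ℝ≥0∞) (ρ : Measure (EuclideanSpace ℝ (Fin d))) : ℝ≥0∞ :=
  ∫⁻ p : EuclideanSpace ℝ (Fin d) × EuclideanSpace ℝ (Fin d),
    ℓ (dist p.1 p.2) ∂(ρ.prod ρ)

/-- The convolution potential `u_ρ(x) = ∫ ℓ(|x-y|) dρ(y)`. -/
def uPot (d : ℕ) (ℓ : ℝ → ℝ≥0∞) (ρ : Measure (EuclideanSpace ℝ (Fin d)))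
    (x : EuclideanSpace ℝ (Fin d)) : ℝ≥0∞ :=
  ∫⁻ y, ℓ (dist x y) ∂ρ

/-- `n_ε(B)`: the maximal cardinality of an `ε`-separated subset of `B`. -/
def packNum (d : ℕ) (ε : ℝ) (B : Set (EuclideanSpace ℝ (Fin d))) : ℕ :=
  sSup {n : ℕ | ∃ s : Finset (EuclideanSpace ℝ (Fin d)), ↑s ⊆ B ∧ s.card = n ∧
    ∀ x ∈ s, ∀ y ∈ s, x ≠ y → ε ≤ dist x y}

/-- The cube `Q_a = [-a/2, a/2]^d`. -/
def cube (d : ℕ) (a : ℝ) : Set (EuclideanSpace ℝ (Fin d)) :=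
  {x | ∀ i, |x i| ≤ a / 2}

/-- The packing constant `γ_d = inf_{k ≥ 1} S(Q_k)/k^d`. -/
def gammaPack (d : ℕ) : ℝ :=
  ⨅ k : ℕ, (packNum d 1 (cube d ((k + 1 : ℕ) : ℝ)) : ℝ) / ((k + 1 : ℕ) : ℝ) ^ d


def lR' (d : ℕ) (ℓ : ℝ → ℝ≥0∞) (a b : EuclideanSpace ℝ (Fin d)) : ℝ :=
  (ℓ (dist a b)).toReal

def PrS (d : ℕ) (ℓ : ℝ → ℝ≥0∞) (N : ℕ) (x : Fin N → EuclideanSpace ℝ (Fin d)) : ℝ :=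
  ∑ i, ∑ j, if i < j then lR' d ℓ (x i) (x j) else 0

def TrS (d : ℕ) (ℓ : ℝ → ℝ≥0∞) (N : ℕ) (x : Fin N → EuclideanSpace ℝ (Fin d)) : ℝ :=
  ∑ i, ∑ j, lR' d ℓ (x i) (x j)

def cRe (d : ℕ) (ℓ : ℝ → ℝ≥0∞) (N : ℕ) (x : Fin N → EuclideanSpace ℝ (Fin d)) : ℝ :=
  (2 / ((N : ℝ) * ((N : ℝ) - 1))) * PrS d ℓ N x

variable {d : ℕ} {ℓ : ℝ → ℝ≥0∞}

lemma lR'_symm (a b : EuclideanSpace ℝ (Fin d)) : lR' d ℓ a b = lR' d ℓ b a := by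
  unfold lR'; rw [dist_comm]

lemma lR'_self (a : EuclideanSpace ℝ (Fin d)) : lR' d ℓ a a = (ℓ 0).toReal := by
  simp [lR', dist_self]

lemma lR'_nonneg (a b : EuclideanSpace ℝ (Fin d)) : 0 ≤ lR' d ℓ a b :=
  ENNReal.toReal_nonneg

lemma ell_le (a b : EuclideanSpace ℝ (Fin d)) :
    ℓ (dist a b) ≤ ⨆ r ∈ Set.Ici (0 : ℝ), ℓ r :=
  le_biSup ℓ (Set.mem_Ici.2 dist_nonneg)

lemma ell_ne_top (hbdd : (⨆ r ∈ Set.Ici (0 : ℝ), ℓ r) ≠ ⊤)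
    (a b : EuclideanSpace ℝ (Fin d)) : ℓ (dist a b) ≠ ⊤ :=
  ne_top_of_le_ne_top hbdd (ell_le a b)

lemma lR'_le (hbdd : (⨆ r ∈ Set.Ici (0 : ℝ), ℓ r) ≠ ⊤)
    (a b : EuclideanSpace ℝ (Fin d)) :
    lR' d ℓ a b ≤ (⨆ r ∈ Set.Ici (0 : ℝ), ℓ r).toReal :=
  ENNReal.toReal_mono hbdd (ell_le a b)

lemma ell0_toReal_le (hbdd : (⨆ r ∈ Set.Ici (0 : ℝ), ℓ r) ≠ ⊤) :
    (ℓ 0).toReal ≤ (⨆ r ∈ Set.Ici (0 : ℝ), ℓ r).toReal :=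
  ENNReal.toReal_mono hbdd (le_biSup ℓ (Set.mem_Ici.2 le_rfl))

lemma ell0_toReal_nonneg : (0:ℝ) ≤ (ℓ 0).toReal := ENNReal.toReal_nonneg

lemma PrS_nonneg (N : ℕ) (x : Fin N → EuclideanSpace ℝ (Fin d)) :
    0 ≤ PrS d ℓ N x := by
  refine Finset.sum_nonneg fun i _ => Finset.sum_nonneg fun j _ => ?_
  split
  · exact lR'_nonneg _ _
  · exact le_rfl

/-- Symmetrization identity: `T = 2 P + N ℓ(0)`. -/
lemma TrS_eq (N : ℕ) (x : Fin N → EuclideanSpace ℝ (Fin d)) :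
    TrS d ℓ N x = 2 * PrS d ℓ N x + N * (ℓ 0).toReal := by
  have key : ∀ i j : Fin N, lR' d ℓ (x i) (x j) =
      (if i < j then lR' d ℓ (x i) (x j) else 0) +
      ((if j < i then lR' d ℓ (x i) (x j) else 0) +
        (if i = j then lR' d ℓ (x i) (x j) else 0)) := by
    intro i j
    rcases lt_trichotomy i j with h | h | h
    · rw [if_pos h, if_neg (asymm h), if_neg h.ne]; ring
    · subst h; simp
    · rw [if_neg (asymm h), if_pos h, if_neg h.ne']; ring
  have h2 : (∑ i : Fin N, ∑ j : Fin N, if j < i then lR' d ℓ (x i) (x j) else 0)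
      = PrS d ℓ N x := by
    rw [Finset.sum_comm]; unfold PrS
    refine Finset.sum_congr rfl fun a _ => Finset.sum_congr rfl fun b _ => ?_
    by_cases h : a < b
    · rw [if_pos h, if_pos h]; exact lR'_symm _ _
    · rw [if_neg h, if_neg h]
  have h3 : (∑ i : Fin N, ∑ j : Fin N, if i = j then lR' d ℓ (x i) (x j) else 0)
      = N * (ℓ 0).toReal := by
    have hh : ∀ i : Fin N, (∑ j : Fin N, if i = j then lR' d ℓ (x i) (x j) else 0)
        = (ℓ 0).toReal := by
      intro i
      rw [Finset.sum_ite_eq Finset.univ i (fun j => lR' d ℓ (x i) (x j)),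
        if_pos (Finset.mem_univ i), lR'_self]
    rw [Finset.sum_congr rfl fun i _ => hh i, Finset.sum_const, Finset.card_univ,
      Fintype.card_fin, nsmul_eq_mul]
  have expand : TrS d ℓ N x =
      (∑ i : Fin N, ∑ j : Fin N, if i < j then lR' d ℓ (x i) (x j) else 0) +
      ((∑ i : Fin N, ∑ j : Fin N, if j < i then lR' d ℓ (x i) (x j) else 0) +
       (∑ i : Fin N, ∑ j : Fin N, if i = j then lR' d ℓ (x i) (x j) else 0)) := by
    simp_rw [← Finset.sum_add_distrib]
    exact Finset.sum_congr rfl fun i _ => Finset.sum_congr rfl fun j _ => key i j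
  rw [expand, h2, h3]
  unfold PrS
  ring

lemma sum_succAbove_S (n : ℕ) (w : EuclideanSpace ℝ (Fin d) → ℝ)
    (x : Fin (n+1) → EuclideanSpace ℝ (Fin d)) :
    ∑ m : Fin (n+1), ∑ i : Fin n, w (x (m.succAbove i)) = n * ∑ a, w (x a) := by
  have h : ∀ m : Fin (n+1), ∑ i : Fin n, w (x (m.succAbove i))
      = (∑ a, w (x a)) - w (x m) := by
    intro m
    have h0 := Fin.sum_univ_succAbove (fun a => w (x a)) m
    linarith
  rw [Finset.sum_congr rfl fun m _ => h m, Finset.sum_sub_distrib, Finset.sum_const,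
    Finset.card_univ, Fintype.card_fin, nsmul_eq_mul]
  push_cast; ring

lemma sum_succAbove_T (n : ℕ) (x : Fin (n+1) → EuclideanSpace ℝ (Fin d)) :
    ∑ m : Fin (n+1), TrS d ℓ n (x ∘ m.succAbove)
      = ((n:ℝ) - 1) * TrS d ℓ (n+1) x + ((n:ℝ)+1) * (ℓ 0).toReal := by
  have hrow : ∀ (m : Fin (n+1)) (a : Fin (n+1)),
      (∑ j : Fin n, lR' d ℓ (x a) (x (m.succAbove j)))
        = (∑ b, lR' d ℓ (x a) (x b)) - lR' d ℓ (x a) (x m) := by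
    intro m a
    have h0 := Fin.sum_univ_succAbove (fun b => lR' d ℓ (x a) (x b)) m
    linarith
  have hTm : ∀ m : Fin (n+1), TrS d ℓ n (x ∘ m.succAbove)
      = TrS d ℓ (n+1) x - (∑ a, lR' d ℓ (x a) (x m))
        - (∑ b, lR' d ℓ (x m) (x b)) + (ℓ 0).toReal := by
    intro m
    have step1 : TrS d ℓ n (x ∘ m.succAbove)
        = ∑ i : Fin n, ((∑ b, lR' d ℓ (x (m.succAbove i)) (x b))
            - lR' d ℓ (x (m.succAbove i)) (x m)) := by
      unfold TrS
      exact Finset.sum_congr rfl fun i _ => hrow m (m.succAbove i)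
    have step2 := Fin.sum_univ_succAbove
      (fun a => (∑ b, lR' d ℓ (x a) (x b)) - lR' d ℓ (x a) (x m)) m
    have step3 : (∑ a : Fin (n+1), ((∑ b, lR' d ℓ (x a) (x b)) - lR' d ℓ (x a) (x m)))
        = TrS d ℓ (n+1) x - ∑ a, lR' d ℓ (x a) (x m) := by
      unfold TrS; rw [Finset.sum_sub_distrib]
    have hself := lR'_self (ℓ := ℓ) (x m)
    rw [step1]
    linarith
  have hcol : ∑ m : Fin (n+1), ∑ a, lR' d ℓ (x a) (x m) = TrS d ℓ (n+1) x := by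
    unfold TrS; rw [Finset.sum_comm]
  have hrow2 : ∑ m : Fin (n+1), ∑ b, lR' d ℓ (x m) (x b) = TrS d ℓ (n+1) x := rfl
  calc ∑ m : Fin (n+1), TrS d ℓ n (x ∘ m.succAbove)
      = ∑ m : Fin (n+1), (TrS d ℓ (n+1) x - (∑ a, lR' d ℓ (x a) (x m))
          - (∑ b, lR' d ℓ (x m) (x b)) + (ℓ 0).toReal) :=
        Finset.sum_congr rfl fun m _ => hTm m
    _ = _ := by
      rw [Finset.sum_add_distrib, Finset.sum_sub_distrib, Finset.sum_sub_distrib,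
        Finset.sum_const, Finset.sum_const, Finset.card_univ, Fintype.card_fin,
        nsmul_eq_mul, nsmul_eq_mul, hcol, hrow2]
      push_cast; ring

lemma sum_succAbove_P (n : ℕ) (x : Fin (n+1) → EuclideanSpace ℝ (Fin d)) :
    ∑ m : Fin (n+1), PrS d ℓ n (x ∘ m.succAbove)
      = ((n:ℝ) - 1) * PrS d ℓ (n+1) x := by
  have hP : ∀ m : Fin (n+1), PrS d ℓ n (x ∘ m.succAbove)
      = (TrS d ℓ n (x ∘ m.succAbove) - n * (ℓ 0).toReal) / 2 := by
    intro m
    have h0 := TrS_eq (ℓ := ℓ) n (x ∘ m.succAbove)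
    linarith
  have hTx := TrS_eq (ℓ := ℓ) (n+1) x
  push_cast at hTx
  rw [Finset.sum_congr rfl fun m _ => hP m, ← Finset.sum_div, Finset.sum_sub_distrib,
    Finset.sum_const, Finset.card_univ, Fintype.card_fin, nsmul_eq_mul,
    sum_succAbove_T]
  push_cast
  linear_combination (((n:ℝ) - 1) / 2) * hTx

/-- Removal of one point: the term does not decrease for some `m`. -/
lemma removal_exists (n : ℕ) (hn : 2 ≤ n) (w : EuclideanSpace ℝ (Fin d) → ℝ)
    (x : Fin (n+1) → EuclideanSpace ℝ (Fin d)) :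
    ∃ m : Fin (n+1), SN d (n+1) w x - cRe d ℓ (n+1) x
      ≤ SN d n w (x ∘ m.succAbove) - cRe d ℓ n (x ∘ m.succAbove) := by
  have hne : (Finset.univ : Finset (Fin (n+1))).Nonempty := Finset.univ_nonempty
  have hn0 : ((n:ℝ)) ≠ 0 := by positivity
  have hn1 : ((n:ℝ)) - 1 ≠ 0 := by
    have : (2:ℝ) ≤ (n:ℝ) := by exact_mod_cast hn
    linarith
  have hn2 : ((n:ℝ)) + 1 ≠ 0 := by positivity
  have hSN : ∑ m : Fin (n+1), SN d n w (x ∘ m.succAbove)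
      = ((n:ℝ)+1) * SN d (n+1) w x := by
    unfold SN
    simp only [Function.comp_apply]
    rw [← Finset.sum_div, sum_succAbove_S]
    push_cast
    field_simp
  have hC : ∑ m : Fin (n+1), cRe d ℓ n (x ∘ m.succAbove)
      = ((n:ℝ)+1) * cRe d ℓ (n+1) x := by
    unfold cRe
    rw [← Finset.mul_sum, sum_succAbove_P]
    push_cast
    field_simp
    ring_nf; field_simp
  have hsum : ∑ _m : Fin (n+1), (SN d (n+1) w x - cRe d ℓ (n+1) x)
      ≤ ∑ m : Fin (n+1), (SN d n w (x ∘ m.succAbove) - cRe d ℓ n (x ∘ m.succAbove)) := by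
    rw [Finset.sum_const, Finset.card_univ, Fintype.card_fin, nsmul_eq_mul,
      Finset.sum_sub_distrib, hSN, hC]
    push_cast
    apply le_of_eq
    ring
  obtain ⟨m, _, hm⟩ := Finset.exists_le_of_sum_le hne hsum
  exact ⟨m, hm⟩

lemma pairCost_coe (hbdd : (⨆ r ∈ Set.Ici (0 : ℝ), ℓ r) ≠ ⊤) (N : ℕ) (hN : 2 ≤ N)
    (x : Fin N → EuclideanSpace ℝ (Fin d)) :
    ((pairCost d ℓ N x : ℝ≥0∞) : EReal) = ((cRe d ℓ N x : ℝ) : EReal) := by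
  have hterm : ∀ i j : Fin N,
      (if i < j then ℓ (dist (x i) (x j)) else 0) ≠ ⊤ := by
    intro i j; split
    · exact ell_ne_top hbdd _ _
    · exact ENNReal.zero_ne_top
  have hsum_ne : (∑ i : Fin N, ∑ j : Fin N,
      if i < j then ℓ (dist (x i) (x j)) else 0) ≠ ⊤ := by
    rw [← lt_top_iff_ne_top]
    refine ENNReal.sum_lt_top.2 fun i _ => ENNReal.sum_lt_top.2 fun j _ => ?_
    exact lt_top_iff_ne_top.2 (hterm i j)
  have hNne : ((N : ℝ≥0∞)) ≠ 0 := by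
    simp; omega
  have hN1ne : ((N : ℝ≥0∞) - 1) ≠ 0 := by
    simp only [ne_eq, tsub_eq_zero_iff_le, not_le]
    exact_mod_cast (by omega : (1:ℕ) < N)
  have hcoef_ne : (2 / ((N : ℝ≥0∞) * ((N : ℝ≥0∞) - 1))) ≠ ⊤ := by
    rw [← lt_top_iff_ne_top]
    exact ENNReal.div_lt_top (by simp) (mul_ne_zero hNne hN1ne)
  have hpc_ne : pairCost d ℓ N x ≠ ⊤ := ENNReal.mul_ne_top hcoef_ne hsum_ne
  have hcoefR : (2 / ((N : ℝ≥0∞) * ((N : ℝ≥0∞) - 1))).toReal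
      = 2 / ((N : ℝ) * ((N : ℝ) - 1)) := by
    rw [ENNReal.toReal_div, ENNReal.toReal_mul,
      ENNReal.toReal_sub_of_le (by exact_mod_cast (by omega : (1:ℕ) ≤ N))
        (ENNReal.natCast_ne_top N)]
    simp
  have htopR : (pairCost d ℓ N x).toReal = cRe d ℓ N x := by
    unfold pairCost cRe
    rw [ENNReal.toReal_mul, hcoefR]
    congr 1
    rw [ENNReal.toReal_sum fun i _ => (by
        rw [← lt_top_iff_ne_top]
        exact ENNReal.sum_lt_top.2 fun j _ => lt_top_iff_ne_top.2 (hterm i j))]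
    refine Finset.sum_congr rfl fun i _ => ?_
    rw [ENNReal.toReal_sum fun j _ => hterm i j]
    refine Finset.sum_congr rfl fun j _ => ?_
    split <;> simp [lR']
  have hne_top : ((pairCost d ℓ N x : ℝ≥0∞) : EReal) ≠ ⊤ := by
    simpa [EReal.coe_ennreal_eq_top_iff] using hpc_ne
  have hne_bot : ((pairCost d ℓ N x : ℝ≥0∞) : EReal) ≠ ⊥ := by
    have : (⊥ : EReal) < ((pairCost d ℓ N x : ℝ≥0∞) : EReal) :=
      lt_of_lt_of_le (by simp) (EReal.coe_ennreal_nonneg _)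
    exact this.ne'
  rw [← EReal.coe_toReal hne_top hne_bot, EReal.toReal_coe_ennreal, htopR]

lemma MN_eq (hbdd : (⨆ r ∈ Set.Ici (0 : ℝ), ℓ r) ≠ ⊤) (N : ℕ) (hN : 2 ≤ N)
    (w : EuclideanSpace ℝ (Fin d) → ℝ) :
    MN d ℓ N w = ⨆ x : Fin N → EuclideanSpace ℝ (Fin d),
      ((SN d N w x - cRe d ℓ N x : ℝ) : EReal) := by
  unfold MN
  refine iSup_congr fun x => ?_
  rw [pairCost_coe hbdd N hN x, ← EReal.coe_sub]

lemma MN_step (hbdd : (⨆ r ∈ Set.Ici (0 : ℝ), ℓ r) ≠ ⊤) (n : ℕ) (hn : 2 ≤ n)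
    (w : EuclideanSpace ℝ (Fin d) → ℝ) :
    MN d ℓ (n+1) w ≤ MN d ℓ n w := by
  rw [MN_eq hbdd (n+1) (by omega) w, MN_eq hbdd n hn w]
  refine iSup_le fun x => ?_
  obtain ⟨m, hm⟩ := removal_exists (ℓ := ℓ) n hn w x
  exact le_trans (EReal.coe_le_coe_iff.2 hm)
    (le_iSup (fun y => ((SN d n w y - cRe d ℓ n y : ℝ) : EReal)) (x ∘ m.succAbove))

lemma MN_mono (hbdd : (⨆ r ∈ Set.Ici (0 : ℝ), ℓ r) ≠ ⊤) {M K : ℕ} (hM : 2 ≤ M)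
    (hK : M ≤ K) (w : EuclideanSpace ℝ (Fin d) → ℝ) :
    MN d ℓ K w ≤ MN d ℓ M w := by
  induction K, hK using Nat.le_induction with
  | base => exact le_rfl
  | succ n hmn ih => exact le_trans (MN_step hbdd n (hM.trans hmn) w) ih

def resid (N k : ℕ) (hN : 0 < N) (p : Fin (k * N)) : Fin N :=
  ⟨p.val % N, Nat.mod_lt _ hN⟩

lemma resid_comp (N k : ℕ) (hN : 0 < N) (p : Fin k × Fin N) :
    resid N k hN (finProdFinEquiv p) = p.2 := by
  apply Fin.ext
  show ((p.2 : ℕ) + N * (p.1 : ℕ)) % N = p.2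
  rw [Nat.add_mul_mod_self_left, Nat.mod_eq_of_lt p.2.isLt]

lemma sum_resid {M : Type*} [AddCommMonoid M] (N k : ℕ) (hN : 0 < N)
    (g : Fin N → M) :
    ∑ p : Fin (k * N), g (resid N k hN p) = k • ∑ i, g i := by
  rw [← Equiv.sum_comp (finProdFinEquiv : Fin k × Fin N ≃ Fin (k * N))
    (fun p => g (resid N k hN p))]
  simp only [resid_comp]
  rw [Fintype.sum_prod_type]
  simp [Finset.sum_const, Finset.card_univ]

lemma sum_resid_real (N k : ℕ) (hN : 0 < N) (g : Fin N → ℝ) :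
    ∑ p : Fin (k * N), g (resid N k hN p) = (k : ℝ) * ∑ i, g i := by
  rw [sum_resid, nsmul_eq_mul]

lemma cost_ineq (n κ P l0 L : ℝ) (hn2 : 2 ≤ n) (hκ1 : 1 ≤ κ) (hP0 : 0 ≤ P)
    (hl0 : 0 ≤ l0) (hl0L : l0 ≤ L) :
    (2 / ((κ * n) * ((κ * n) - 1))) * (κ^2 * P + κ * n * (κ - 1) / 2 * l0)
      ≤ (2 / (n * (n - 1))) * P + L / n := by
  have hκn : (2:ℝ) ≤ κ * n := by nlinarith
  have hd1 : (0:ℝ) < κ * n - 1 := by linarith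
  have hd0 : (0:ℝ) < κ * n := by linarith
  have hd2 : (0:ℝ) < n - 1 := by linarith
  have hn0 : (0:ℝ) < n := by linarith
  have expand : (2 / ((κ * n) * ((κ * n) - 1))) * (κ^2 * P + κ * n * (κ - 1) / 2 * l0)
      = (2 * κ^2 / ((κ * n) * (κ * n - 1))) * P + ((κ - 1) / (κ * n - 1)) * l0 := by
    field_simp
  have hA : 2 * κ^2 / ((κ * n) * (κ * n - 1)) ≤ 2 / (n * (n - 1)) := by
    rw [div_le_div_iff₀ (mul_pos hd0 hd1) (mul_pos hn0 hd2)]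
    nlinarith [mul_nonneg hd0.le (by linarith : (0:ℝ) ≤ κ - 1)]
  have hB : (κ - 1) / (κ * n - 1) ≤ 1 / n := by
    rw [div_le_div_iff₀ hd1 hn0]
    nlinarith
  have t1 : (2 * κ^2 / ((κ * n) * (κ * n - 1))) * P ≤ (2 / (n * (n - 1))) * P :=
    mul_le_mul_of_nonneg_right hA hP0
  have t2 : ((κ - 1) / (κ * n - 1)) * l0 ≤ (1 / n) * L :=
    mul_le_mul hB hl0L hl0 (by positivity)
  have t3 : (1 / n) * L = L / n := by ring
  linarith [expand.le, expand.ge]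

/-- Replication: `M_N ≤ M_{kN} + (sup ℓ)/N`. -/
lemma MN_repl (hbdd : (⨆ r ∈ Set.Ici (0 : ℝ), ℓ r) ≠ ⊤)
    (N k : ℕ) (hN : 2 ≤ N) (hk : 1 ≤ k) (w : EuclideanSpace ℝ (Fin d) → ℝ) :
    MN d ℓ N w ≤ MN d ℓ (k * N) w
      + (((⨆ r ∈ Set.Ici (0 : ℝ), ℓ r).toReal / N : ℝ) : EReal) := by
  have hN0 : 0 < N := by omega
  have hkN : 2 ≤ k * N := le_trans hN (Nat.le_mul_of_pos_left N (by omega))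
  rw [MN_eq hbdd N hN w, MN_eq hbdd (k * N) hkN w]
  refine iSup_le fun x => ?_
  have hcast : ((k * N : ℕ) : ℝ) = (k : ℝ) * (N : ℝ) := by push_cast; ring
  have hk0 : ((k : ℝ)) ≠ 0 := by
    have : (1:ℝ) ≤ (k:ℝ) := by exact_mod_cast hk
    linarith
  -- S identity
  have hS1 : ∑ p : Fin (k * N), w (x (resid N k hN0 p)) = (k:ℝ) * ∑ i, w (x i) :=
    sum_resid_real N k hN0 (fun i => w (x i))
  have hSy : SN d (k * N) w (fun p => x (resid N k hN0 p)) = SN d N w x := by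
    unfold SN
    beta_reduce
    rw [hS1, hcast, mul_div_mul_left _ _ hk0]
  -- T identity
  have hT2 : ∀ p : Fin (k * N),
      (∑ q : Fin (k * N), lR' d ℓ (x (resid N k hN0 p)) (x (resid N k hN0 q)))
        = (k:ℝ) * ∑ j, lR' d ℓ (x (resid N k hN0 p)) (x j) :=
    fun p => sum_resid_real N k hN0 (fun j => lR' d ℓ (x (resid N k hN0 p)) (x j))
  have hT3 : (∑ p : Fin (k * N), ∑ j : Fin N, lR' d ℓ (x (resid N k hN0 p)) (x j))
      = (k:ℝ) * ∑ i, ∑ j, lR' d ℓ (x i) (x j) :=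
    sum_resid_real N k hN0 (fun i => ∑ j, lR' d ℓ (x i) (x j))
  have hTy : TrS d ℓ (k * N) (fun p => x (resid N k hN0 p))
      = (k:ℝ)^2 * TrS d ℓ N x := by
    unfold TrS
    beta_reduce
    rw [Finset.sum_congr rfl fun p _ => hT2 p, ← Finset.mul_sum, hT3]
    ring
  have e1 := TrS_eq (ℓ := ℓ) (k * N) (fun p => x (resid N k hN0 p))
  have e2 := TrS_eq (ℓ := ℓ) N x
  rw [hcast] at e1
  have hPy : PrS d ℓ (k * N) (fun p => x (resid N k hN0 p))
      = (k:ℝ)^2 * PrS d ℓ N x + (k:ℝ) * (N:ℝ) * ((k:ℝ) - 1) / 2 * (ℓ 0).toReal := by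
    linear_combination (-1/2) * e1 + (1/2) * hTy + ((k:ℝ)^2/2) * e2
  -- cost comparison
  have hcost : cRe d ℓ (k * N) (fun p => x (resid N k hN0 p))
      ≤ cRe d ℓ N x + (⨆ r ∈ Set.Ici (0 : ℝ), ℓ r).toReal / N := by
    unfold cRe
    rw [hPy, hcast]
    exact cost_ineq (N:ℝ) (k:ℝ) (PrS d ℓ N x) (ℓ 0).toReal
      (⨆ r ∈ Set.Ici (0 : ℝ), ℓ r).toReal
      (by exact_mod_cast hN) (by exact_mod_cast hk) (PrS_nonneg N x)
      ENNReal.toReal_nonneg (ell0_toReal_le hbdd)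
  have key : SN d N w x - cRe d ℓ N x
      ≤ (SN d (k * N) w (fun p => x (resid N k hN0 p))
          - cRe d ℓ (k * N) (fun p => x (resid N k hN0 p)))
        + (⨆ r ∈ Set.Ici (0 : ℝ), ℓ r).toReal / N := by
    rw [hSy]; linarith
  calc ((SN d N w x - cRe d ℓ N x : ℝ) : EReal)
      ≤ (((SN d (k * N) w (fun p => x (resid N k hN0 p))
            - cRe d ℓ (k * N) (fun p => x (resid N k hN0 p)))
          + (⨆ r ∈ Set.Ici (0 : ℝ), ℓ r).toReal / N : ℝ) : EReal) :=
        EReal.coe_le_coe_iff.2 key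
    _ = ((SN d (k * N) w (fun p => x (resid N k hN0 p))
            - cRe d ℓ (k * N) (fun p => x (resid N k hN0 p)) : ℝ) : EReal)
          + (((⨆ r ∈ Set.Ici (0 : ℝ), ℓ r).toReal / N : ℝ) : EReal) := by
        rw [EReal.coe_add]
    _ ≤ (⨆ z : Fin (k * N) → EuclideanSpace ℝ (Fin d),
          ((SN d (k * N) w z - cRe d ℓ (k * N) z : ℝ) : EReal))
          + (((⨆ r ∈ Set.Ici (0 : ℝ), ℓ r).toReal / N : ℝ) : EReal) :=
        add_le_add_left
          (le_iSup (fun z => ((SN d (k * N) w z - cRe d ℓ (k * N) z : ℝ) : EReal))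
            (fun p => x (resid N k hN0 p))) _

theorem statement_12aux (d : ℕ) (ℓ : ℝ → ℝ≥0∞)
    (hbdd : (⨆ r ∈ Set.Ici (0 : ℝ), ℓ r) ≠ ⊤)
    (v : C₀(EuclideanSpace ℝ (Fin d), ℝ)) (N : ℕ) (hN : 2 ≤ N) :
    Minf d ℓ (fun x => v x) ≤ MN d ℓ N (fun x => v x) ∧
    MN d ℓ N (fun x => v x) ≤ Minf d ℓ (fun x => v x) +
      (((1 / (N : ℝ)) * ((⨆ r ∈ Set.Ici (0 : ℝ), ℓ r).toReal +
        (⨆ x, max (v x) 0)) : ℝ) : EReal) := by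
  constructor
  · exact iInf_le_of_le N (iInf_le _ hN)
  · set E : ℝ := (1 / (N : ℝ)) * ((⨆ r ∈ Set.Ici (0 : ℝ), ℓ r).toReal +
      (⨆ x, max (v x) 0)) with hE
    have hV0 : (0:ℝ) ≤ ⨆ x, max (v x) 0 :=
      Real.iSup_nonneg fun x => le_max_right _ _
    have hLr0 : (0:ℝ) ≤ (⨆ r ∈ Set.Ici (0 : ℝ), ℓ r).toReal := ENNReal.toReal_nonneg
    have hNpos : (0:ℝ) < (N:ℝ) := by
      have : (2:ℝ) ≤ (N:ℝ) := by exact_mod_cast hN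
      linarith
    have hLE : (⨆ r ∈ Set.Ici (0 : ℝ), ℓ r).toReal / (N:ℝ) ≤ E := by
      rw [hE, div_eq_mul_inv, mul_comm]
      rw [← one_div]
      apply mul_le_mul_of_nonneg_left (by linarith) (by positivity)
    have step : ∀ N' : ℕ, 2 ≤ N' →
        MN d ℓ N (fun x => v x) ≤ MN d ℓ N' (fun x => v x) + (E : EReal) := by
      intro N' hN'
      have h1 := MN_repl (d := d) (ℓ := ℓ) hbdd N N' hN (by omega) (fun x => v x)
      have h2 : MN d ℓ (N' * N) (fun x => v x) ≤ MN d ℓ N' (fun x => v x) :=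
        MN_mono hbdd hN' (Nat.le_mul_of_pos_right N' (by omega)) _
      calc MN d ℓ N (fun x => v x)
          ≤ MN d ℓ (N' * N) (fun x => v x)
            + (((⨆ r ∈ Set.Ici (0 : ℝ), ℓ r).toReal / N : ℝ) : EReal) := h1
        _ ≤ MN d ℓ N' (fun x => v x)
            + (((⨆ r ∈ Set.Ici (0 : ℝ), ℓ r).toReal / N : ℝ) : EReal) :=
            add_le_add_left h2 _
        _ ≤ MN d ℓ N' (fun x => v x) + (E : EReal) :=
            add_le_add_right (EReal.coe_le_coe_iff.2 hLE) _
    have hsub : ∀ N' : ℕ, 2 ≤ N' →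
        MN d ℓ N (fun x => v x) - (E : EReal) ≤ MN d ℓ N' (fun x => v x) := by
      intro N' hN'
      calc MN d ℓ N (fun x => v x) - (E : EReal)
          ≤ (MN d ℓ N' (fun x => v x) + (E : EReal)) - (E : EReal) :=
            EReal.sub_le_sub (step N' hN') le_rfl
        _ = MN d ℓ N' (fun x => v x) := EReal.add_sub_cancel_right
    have hMinf : MN d ℓ N (fun x => v x) - (E : EReal) ≤ Minf d ℓ (fun x => v x) :=
      le_iInf fun N' => le_iInf fun hN' => hsub N' hN'
    calc MN d ℓ N (fun x => v x)
        = (MN d ℓ N (fun x => v x) - (E : EReal)) + (E : EReal) :=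
          (EReal.sub_add_cancel).symm
      _ ≤ Minf d ℓ (fun x => v x) + (E : EReal) := add_le_add_left hMinf _


/-- for bounded `ℓ`, `M_∞(v) ≤ M_N(v) ≤ M_∞(v) + (sup ℓ + sup v₊)/N`. -/
theorem statement_12 (d : ℕ) (hd : 1 ≤ d) (ℓ : ℝ → ℝ≥0∞)
    (hl_lsc : LowerSemicontinuousOn ℓ (Set.Ici 0))
    (hl0 : 0 < ℓ 0)
    (hl_decay : Filter.Tendsto ℓ Filter.atTop (nhds 0))
    (hbdd : (⨆ r ∈ Set.Ici (0 : ℝ), ℓ r) ≠ ⊤)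
    (v : C₀(EuclideanSpace ℝ (Fin d), ℝ)) (N : ℕ) (hN : 2 ≤ N) :
    Minf d ℓ (fun x => v x) ≤ MN d ℓ N (fun x => v x) ∧
    MN d ℓ N (fun x => v x) ≤ Minf d ℓ (fun x => v x) +
      (((1 / (N : ℝ)) * ((⨆ r ∈ Set.Ici (0 : ℝ), ℓ r).toReal +
        (⨆ x, max (v x) 0)) : ℝ) : EReal) :=
  statement_12aux d ℓ hbdd v N hN

end
end

section
/- Let λ ≥ 0 and v ∈ C_0(ℝ^d) with v ≥ 0. Suppose ρ ∈ P_-(ℝ^d) minimizes μ ↦ D₂(μ) − λ ∫ v dμ over P_-(ℝ^d). Then there exists a real constant c such that: (a) c ≤ 0, and c = 0 whenever ρ(ℝ^d) < 1; (b) u_ρ(x) − (λ/2) v(x) = c for ρ-almost every x; (c) u_ρ(x) − (λ/2) v(x) ≥ c for ν-almost every x, for every ν ∈ P_-(ℝ^d) with D₂(ν) < ∞ and ∫ u_ρ dν < ∞. -/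
open MeasureTheory ENNReal Filter Topology
open scoped ZeroAtInfty

noncomputable section

variable {d : ℕ} {ℓ : ℝ → ℝ≥0∞}

local notation "X" => EuclideanSpace ℝ (Fin d)

lemma kmeas (hl : LowerSemicontinuousOn ℓ (Set.Ici 0)) :
    Measurable (fun p : X × X => ℓ (dist p.1 p.2)) := by
  have lsc : LowerSemicontinuous (fun p : X × X => ℓ (dist p.1 p.2)) := by
    intro p c hc
    have h1 := hl (dist p.1 p.2) dist_nonneg c hc
    have h2 : Tendsto (fun q : X × X => dist q.1 q.2) (𝓝 p)
        (𝓝[Set.Ici 0] (dist p.1 p.2)) := by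
      apply tendsto_nhdsWithin_of_tendsto_nhds_of_eventually_within
      · exact continuous_dist.continuousAt
      · exact Eventually.of_forall fun q => dist_nonneg
    exact h2.eventually h1
  exact lsc.measurable

lemma uPot_meas (hm : Measurable (fun p : X × X => ℓ (dist p.1 p.2)))
    (ρ : Measure X) [SFinite ρ] : Measurable (uPot d ℓ ρ) :=
  Measurable.lintegral_prod_right (f := fun x y => ℓ (dist x y)) hm

lemma denergy_eq (hm : Measurable (fun p : X × X => ℓ (dist p.1 p.2)))
    (ρ : Measure X) [SFinite ρ] :
    Denergy d ℓ ρ = ∫⁻ x, uPot d ℓ ρ x ∂ρ :=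
  lintegral_prod _ hm.aemeasurable

lemma pair_symm (hm : Measurable (fun p : X × X => ℓ (dist p.1 p.2)))
    (ρ ν : Measure X) [SFinite ρ] [SFinite ν] :
    ∫⁻ x, uPot d ℓ ρ x ∂ν = ∫⁻ x, uPot d ℓ ν x ∂ρ := by
  have h := lintegral_lintegral_swap (μ := ν) (ν := ρ)
    (f := fun x y => ℓ (dist x y)) hm.aemeasurable
  simp only [uPot]
  rw [h]
  refine lintegral_congr fun y => lintegral_congr fun x => ?_
  rw [dist_comm]

lemma uPot_comb (hm : Measurable (fun p : X × X => ℓ (dist p.1 p.2)))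
    (a b : ℝ≥0∞) (ρ ν : Measure X) (x : X) :
    uPot d ℓ (a • ρ + b • ν) x = a * uPot d ℓ ρ x + b * uPot d ℓ ν x := by
  simp only [uPot]
  rw [lintegral_add_measure, lintegral_smul_measure, lintegral_smul_measure, smul_eq_mul, smul_eq_mul]

lemma denergy_comb (hm : Measurable (fun p : X × X => ℓ (dist p.1 p.2)))
    (a b : ℝ≥0∞) (ρ ν : Measure X) [SFinite ρ] [SFinite ν] :
    Denergy d ℓ (a • ρ + b • ν) =
      a * a * Denergy d ℓ ρ + a * b * (∫⁻ x, uPot d ℓ ν x ∂ρ)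
        + (b * a * (∫⁻ x, uPot d ℓ ρ x ∂ν) + b * b * Denergy d ℓ ν) := by
  have hmr : Measurable (uPot d ℓ ρ) := uPot_meas hm ρ
  have hmn : Measurable (uPot d ℓ ν) := uPot_meas hm ν
  rw [denergy_eq hm, denergy_eq hm, denergy_eq hm]
  have : ∀ x, uPot d ℓ (a • ρ + b • ν) x = a * uPot d ℓ ρ x + b * uPot d ℓ ν x :=
    uPot_comb hm a b ρ ν
  rw [lintegral_congr this]
  rw [lintegral_add_measure, lintegral_smul_measure, lintegral_smul_measure,
    lintegral_add_left (hmr.const_mul a), lintegral_add_left (hmr.const_mul a),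
    lintegral_const_mul _ hmr, lintegral_const_mul _ hmn,
    lintegral_const_mul _ hmr, lintegral_const_mul _ hmn]
  ring

lemma denergy_smul (hm : Measurable (fun p : X × X => ℓ (dist p.1 p.2)))
    (a : ℝ≥0∞) (ρ : Measure X) [SFinite ρ] :
    Denergy d ℓ (a • ρ) = a * a * Denergy d ℓ ρ := by
  have h := denergy_comb hm a 0 ρ (0 : Measure X)
  simp only [zero_smul, add_zero, zero_mul, mul_zero] at h
  simpa using h

lemma denergy_restrict_le (hm : Measurable (fun p : X × X => ℓ (dist p.1 p.2)))
    (ν : Measure X) [SFinite ν] (S : Set X) :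
    Denergy d ℓ (ν.restrict S) ≤ Denergy d ℓ ν := by
  rw [denergy_eq hm, denergy_eq hm]
  calc ∫⁻ x, uPot d ℓ (ν.restrict S) x ∂(ν.restrict S)
      ≤ ∫⁻ x, uPot d ℓ ν x ∂(ν.restrict S) := by
        refine lintegral_mono fun x => ?_
        exact lintegral_mono' Measure.restrict_le_self le_rfl
    _ ≤ ∫⁻ x, uPot d ℓ ν x ∂ν := lintegral_mono' Measure.restrict_le_self le_rfl

lemma coe_ennreal_eq_toReal {x : ℝ≥0∞} (h : x ≠ ⊤) :
    (x : EReal) = ((x.toReal : ℝ) : EReal) := by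
  lift x to NNReal using h
  rw [EReal.coe_nnreal_eq_coe_real]
  simp

lemma star_lemma (hm : Measurable (fun p : X × X => ℓ (dist p.1 p.2)))
    (lam : ℝ) (v : C₀(X, ℝ))
    (ρ : Measure X) (hρ : ρ Set.univ ≤ 1)
    (hmin : ∀ σ : Measure X, σ Set.univ ≤ 1 →
      ((Denergy d ℓ ρ : ℝ≥0∞) : EReal) - ((lam * ∫ x, v x ∂ρ : ℝ) : EReal) ≤
        ((Denergy d ℓ σ : ℝ≥0∞) : EReal) - ((lam * ∫ x, v x ∂σ : ℝ) : EReal))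
    (hA : Denergy d ℓ ρ ≠ ⊤)
    (ν : Measure X) (hν : ν Set.univ ≤ 1) (hB : Denergy d ℓ ν ≠ ⊤)
    (hI : (∫⁻ x, uPot d ℓ ρ x ∂ν) ≠ ⊤) :
    (Denergy d ℓ ρ).toReal - (lam / 2) * ∫ x, v x ∂ρ ≤
      (∫⁻ x, uPot d ℓ ρ x ∂ν).toReal - (lam / 2) * ∫ x, v x ∂ν := by
  haveI : IsFiniteMeasure ρ := ⟨lt_of_le_of_lt hρ one_lt_top⟩
  haveI : IsFiniteMeasure ν := ⟨lt_of_le_of_lt hν one_lt_top⟩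
  set A := (Denergy d ℓ ρ).toReal with hAdef
  set B := (Denergy d ℓ ν).toReal with hBdef
  set Ir := (∫⁻ x, uPot d ℓ ρ x ∂ν).toReal with hIrdef
  set L := ∫ x, v x ∂ρ with hLdef
  set Lν := ∫ x, v x ∂ν with hLνdef
  have intgρ : Integrable (fun x => v x) ρ := v.toBCF.integrable ρ
  have intgν : Integrable (fun x => v x) ν := v.toBCF.integrable ν
  have key : ∀ n : ℕ, 0 ≤ (A + B - 2 * Ir) * (1 / ((n : ℝ) + 1))
      + (-2 * A + 2 * Ir + lam * L - lam * Lν) := by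
    intro n
    set t : ℝ := 1 / ((n : ℝ) + 1) with htdef
    have ht0 : 0 < t := by positivity
    have ht1 : t ≤ 1 := by
      rw [htdef]
      rw [div_le_one (by positivity)]
      simp
    have h1t : 0 ≤ 1 - t := by linarith
    set σ : Measure X := ENNReal.ofReal (1 - t) • ρ + ENNReal.ofReal t • ν with hσdef
    have hσm : σ Set.univ ≤ 1 := by
      have h1 : σ Set.univ = ENNReal.ofReal (1 - t) * ρ Set.univ
          + ENNReal.ofReal t * ν Set.univ := by
        simp [hσdef, Measure.add_apply, Measure.smul_apply, smul_eq_mul]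
      rw [h1]
      calc ENNReal.ofReal (1 - t) * ρ Set.univ + ENNReal.ofReal t * ν Set.univ
          ≤ ENNReal.ofReal (1 - t) * 1 + ENNReal.ofReal t * 1 :=
            add_le_add (mul_le_mul_right hρ _) (mul_le_mul_right hν _)
        _ = 1 := by
            rw [mul_one, mul_one, ← ENNReal.ofReal_add h1t ht0.le]
            norm_num
    have hsymm : ∫⁻ x, uPot d ℓ ν x ∂ρ = ∫⁻ x, uPot d ℓ ρ x ∂ν :=
      (pair_symm hm ρ ν).symm
    have hDσ : Denergy d ℓ σ =
        ENNReal.ofReal (1 - t) * ENNReal.ofReal (1 - t) * Denergy d ℓ ρ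
        + ENNReal.ofReal (1 - t) * ENNReal.ofReal t * (∫⁻ x, uPot d ℓ ρ x ∂ν)
        + (ENNReal.ofReal t * ENNReal.ofReal (1 - t) * (∫⁻ x, uPot d ℓ ρ x ∂ν)
          + ENNReal.ofReal t * ENNReal.ofReal t * Denergy d ℓ ν) := by
      rw [hσdef, denergy_comb hm, hsymm]
    have hDσne : Denergy d ℓ σ ≠ ⊤ := by
      rw [hDσ]; finiteness
    have hDσt : (Denergy d ℓ σ).toReal =
        (1 - t) * (1 - t) * A + (1 - t) * t * Ir + (t * (1 - t) * Ir + t * t * B) := by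
      rw [hDσ]
      rw [ENNReal.toReal_add (by finiteness) (by finiteness),
        ENNReal.toReal_add (by finiteness) (by finiteness),
        ENNReal.toReal_add (by finiteness) (by finiteness)]
      simp only [ENNReal.toReal_mul, ENNReal.toReal_ofReal h1t, ENNReal.toReal_ofReal ht0.le, hAdef, hBdef, hIrdef]
    have hvσ : ∫ x, v x ∂σ = (1 - t) * L + t * Lν := by
      rw [hσdef]
      rw [integral_add_measure (intgρ.smul_measure ofReal_ne_top)
        (intgν.smul_measure ofReal_ne_top),
        integral_smul_measure, integral_smul_measure,
        ENNReal.toReal_ofReal h1t, ENNReal.toReal_ofReal ht0.le]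
      simp [smul_eq_mul, hLdef, hLνdef]
    have h := hmin σ hσm
    rw [coe_ennreal_eq_toReal hA, coe_ennreal_eq_toReal hDσne,
      ← EReal.coe_sub, ← EReal.coe_sub] at h
    have e : A - lam * L ≤ (Denergy d ℓ σ).toReal - lam * ∫ x, v x ∂σ := by
      exact_mod_cast h
    rw [hDσt, hvσ] at e
    have hq : 0 ≤ t * ((A + B - 2 * Ir) * t + (-2 * A + 2 * Ir + lam * L - lam * Lν)) := by
      nlinarith [e]
    exact le_of_mul_le_mul_left (by linarith) ht0
  have hlim : Tendsto (fun n : ℕ => (A + B - 2 * Ir) * (1 / ((n : ℝ) + 1))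
      + (-2 * A + 2 * Ir + lam * L - lam * Lν)) atTop
      (𝓝 ((A + B - 2 * Ir) * 0 + (-2 * A + 2 * Ir + lam * L - lam * Lν))) :=
    ((tendsto_one_div_add_atTop_nhds_zero_nat).const_mul _).add_const _
  have h0 : (0 : ℝ) ≤ (A + B - 2 * Ir) * 0 + (-2 * A + 2 * Ir + lam * L - lam * Lν) :=
    ge_of_tendsto' hlim key
  rw [mul_zero, zero_add] at h0
  linarith

lemma ae_ineq (hm : Measurable (fun p : X × X => ℓ (dist p.1 p.2)))
    (lam : ℝ) (v : C₀(X, ℝ))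
    (ρ : Measure X) (hρ : ρ Set.univ ≤ 1)
    (hmin : ∀ σ : Measure X, σ Set.univ ≤ 1 →
      ((Denergy d ℓ ρ : ℝ≥0∞) : EReal) - ((lam * ∫ x, v x ∂ρ : ℝ) : EReal) ≤
        ((Denergy d ℓ σ : ℝ≥0∞) : EReal) - ((lam * ∫ x, v x ∂σ : ℝ) : EReal))
    (hA : Denergy d ℓ ρ ≠ ⊤) (hm0 : ρ Set.univ ≠ 0)
    (c : ℝ)
    (hc : (Denergy d ℓ ρ).toReal - (lam / 2) * ∫ x, v x ∂ρ = c * (ρ Set.univ).toReal)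
    (ν : Measure X) (hν : ν Set.univ ≤ 1) (hB : Denergy d ℓ ν ≠ ⊤)
    (hI : (∫⁻ x, uPot d ℓ ρ x ∂ν) ≠ ⊤) :
    ∀ᵐ x ∂ν, ((c + (lam / 2) * v x : ℝ) : EReal) ≤ ((uPot d ℓ ρ x : ℝ≥0∞) : EReal) := by
  haveI : IsFiniteMeasure ρ := ⟨lt_of_le_of_lt hρ one_lt_top⟩
  haveI : IsFiniteMeasure ν := ⟨lt_of_le_of_lt hν one_lt_top⟩
  set g := uPot d ℓ ρ with hgdef
  have hg : Measurable g := uPot_meas hm ρ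
  set m := ρ Set.univ with hmdef
  have hmtop : m ≠ ⊤ := (lt_of_le_of_lt hρ one_lt_top).ne
  have hmr : 0 < m.toReal := ENNReal.toReal_pos hm0 hmtop
  set S : ℕ → Set X := fun n =>
    {x | g x ≠ ⊤ ∧ (g x).toReal - (lam / 2) * v x ≤ c - 1 / ((n : ℝ) + 1)} with hSdef
  have hSmeas : ∀ n, MeasurableSet (S n) := by
    intro n
    apply MeasurableSet.inter
    · exact (hg (measurableSet_singleton ⊤)).compl
    · exact measurableSet_le
        (hg.ennreal_toReal.sub ((v.continuous.measurable).const_mul (lam / 2)))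
        measurable_const
  have hS0 : ∀ n, ν (S n) = 0 := by
    intro n
    by_contra hpos
    set s := ν (S n) with hsdef
    have hstop : s ≠ ⊤ := ((measure_mono (Set.subset_univ _)).trans_lt
      (lt_of_le_of_lt hν one_lt_top)).ne
    set k := m / s with hkdef
    have hktop : k ≠ ⊤ := (ENNReal.div_lt_top hmtop hpos).ne
    set ν' : Measure X := k • ν.restrict (S n) with hν'def
    have hν'univ : ν' Set.univ = m := by
      rw [hν'def, Measure.smul_apply, Measure.restrict_apply_univ, smul_eq_mul, hkdef]
      exact ENNReal.div_mul_cancel hpos hstop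
    have hν'1 : ν' Set.univ ≤ 1 := hν'univ ▸ hρ
    have hDν' : Denergy d ℓ ν' ≠ ⊤ := by
      rw [hν'def, denergy_smul hm]
      exact ((mul_le_mul_right (denergy_restrict_le hm ν (S n)) _).trans_lt
        (by rw [lt_top_iff_ne_top]; finiteness)).ne
    have hgrest : (∫⁻ x, g x ∂(ν.restrict (S n))) ≠ ⊤ := by
      exact ((lintegral_mono' Measure.restrict_le_self le_rfl).trans_lt
        (lt_top_iff_ne_top.2 hI)).ne
    have hIν' : (∫⁻ x, g x ∂ν') ≠ ⊤ := by
      rw [hν'def, lintegral_smul_measure]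
      exact ENNReal.mul_ne_top hktop hgrest
    have hstar := star_lemma hm lam v ρ hρ hmin hA ν' hν'1 hDν' hIν'
    -- compute the RHS of hstar
    have hint_toReal : ∫ x, (g x).toReal ∂(ν.restrict (S n))
        = (∫⁻ x, g x ∂(ν.restrict (S n))).toReal := by
      apply integral_toReal hg.aemeasurable
      filter_upwards [ae_restrict_mem (hSmeas n)] with x hx
      exact lt_top_iff_ne_top.2 hx.1
    have hintg : Integrable (fun x => (g x).toReal) (ν.restrict (S n)) :=
      integrable_toReal_of_lintegral_ne_top hg.aemeasurable hgrest
    have hintv : Integrable (fun x => (lam / 2) * v x) (ν.restrict (S n)) :=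
      (v.toBCF.integrable _).const_mul _
    have hrhs : (∫⁻ x, g x ∂ν').toReal - lam / 2 * ∫ x, v x ∂ν'
        = k.toReal * ∫ x, ((g x).toReal - (lam / 2) * v x) ∂(ν.restrict (S n)) := by
      rw [hν'def, lintegral_smul_measure, (smul_eq_mul (α := ℝ≥0∞)), integral_smul_measure,
        ENNReal.toReal_mul, hint_toReal.symm, integral_sub hintg hintv]
      rw [integral_const_mul]
      simp only [smul_eq_mul]
      ring
    have hbound : ∫ x, ((g x).toReal - (lam / 2) * v x) ∂(ν.restrict (S n))
        ≤ (c - 1 / ((n : ℝ) + 1)) * s.toReal := by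
      have := integral_mono_ae (hintg.sub hintv) (integrable_const (c - 1 / ((n : ℝ) + 1)))
        (by filter_upwards [ae_restrict_mem (hSmeas n)] with x hx; exact hx.2)
      rw [integral_const, Measure.real, Measure.restrict_apply_univ] at this
      simpa [smul_eq_mul, mul_comm] using this
    have hks : k.toReal * s.toReal = m.toReal := by
      rw [← ENNReal.toReal_mul, hkdef, ENNReal.div_mul_cancel hpos hstop]
    have hkr : 0 ≤ k.toReal := ENNReal.toReal_nonneg
    have hfinal : c * m.toReal ≤ (c - 1 / ((n : ℝ) + 1)) * m.toReal := by
      calc c * m.toReal = (Denergy d ℓ ρ).toReal - lam / 2 * ∫ x, v x ∂ρ := hc.symm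
        _ ≤ (∫⁻ x, g x ∂ν').toReal - lam / 2 * ∫ x, v x ∂ν' := hstar
        _ = k.toReal * ∫ x, ((g x).toReal - (lam / 2) * v x) ∂(ν.restrict (S n)) := hrhs
        _ ≤ k.toReal * ((c - 1 / ((n : ℝ) + 1)) * s.toReal) :=
            mul_le_mul_of_nonneg_left hbound hkr
        _ = (c - 1 / ((n : ℝ) + 1)) * m.toReal := by rw [← hks]; ring
    have hn : (0 : ℝ) < 1 / ((n : ℝ) + 1) := by positivity
    nlinarith
  have hunion : ν (⋃ n, S n) = 0 := measure_iUnion_null hS0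
  filter_upwards [measure_eq_zero_iff_ae_notMem.1 hunion] with x hx
  by_cases htop : g x = ⊤
  · rw [htop]
    simp
  · have hxh : ∀ n : ℕ, c - 1 / ((n : ℝ) + 1) < (g x).toReal - (lam / 2) * v x := by
      intro n
      by_contra hcon
      exact hx (Set.mem_iUnion.2 ⟨n, ⟨htop, le_of_not_gt hcon⟩⟩)
    have hch : c ≤ (g x).toReal - (lam / 2) * v x := by
      by_contra hcon
      obtain ⟨n, hn⟩ := exists_nat_one_div_lt (sub_pos.2 (lt_of_not_ge hcon))
      have := hxh n
      linarith
    rw [coe_ennreal_eq_toReal htop]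
    exact_mod_cast (by linarith : c + (lam / 2) * v x ≤ (g x).toReal)

/-- Euler–Lagrange optimality conditions for minimizers of
`D₂ - λ⟨v,·⟩` over sub-probabilities. -/
theorem statement_15 (d : ℕ) (hd : 1 ≤ d) (ℓ : ℝ → ℝ≥0∞)
    (hl_lsc : LowerSemicontinuousOn ℓ (Set.Ici 0))
    (hl0 : 0 < ℓ 0)
    (hl_decay : Filter.Tendsto ℓ Filter.atTop (nhds 0))
    (lam : ℝ) (hlam : 0 ≤ lam)
    (v : C₀(EuclideanSpace ℝ (Fin d), ℝ)) (hv0 : ∀ x, 0 ≤ v x)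
    (ρ : Measure (EuclideanSpace ℝ (Fin d))) (hρ : ρ Set.univ ≤ 1)
    (hmin : ∀ σ : Measure (EuclideanSpace ℝ (Fin d)), σ Set.univ ≤ 1 →
      ((Denergy d ℓ ρ : ℝ≥0∞) : EReal) - ((lam * ∫ x, v x ∂ρ : ℝ) : EReal) ≤
        ((Denergy d ℓ σ : ℝ≥0∞) : EReal) - ((lam * ∫ x, v x ∂σ : ℝ) : EReal)) :
    ∃ c : ℝ, c ≤ 0 ∧ (ρ Set.univ < 1 → c = 0) ∧
      (∀ᵐ x ∂ρ, ((uPot d ℓ ρ x : ℝ≥0∞) : EReal) = ((c + (lam / 2) * v x : ℝ) : EReal)) ∧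
      (∀ ν : Measure (EuclideanSpace ℝ (Fin d)), ν Set.univ ≤ 1 →
        Denergy d ℓ ν ≠ ⊤ → (∫⁻ x, uPot d ℓ ρ x ∂ν) ≠ ⊤ →
        ∀ᵐ x ∂ν, ((c + (lam / 2) * v x : ℝ) : EReal) ≤ ((uPot d ℓ ρ x : ℝ≥0∞) : EReal)) := by
  have hK : Measurable (fun p : EuclideanSpace ℝ (Fin d) × EuclideanSpace ℝ (Fin d) => ℓ (dist p.1 p.2)) := kmeas hl_lsc
  haveI : IsFiniteMeasure ρ := ⟨lt_of_le_of_lt hρ one_lt_top⟩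
  have intgρ : Integrable (fun x => v x) ρ := v.toBCF.integrable ρ
  have hzero_mass : (0 : Measure (EuclideanSpace ℝ (Fin d))) Set.univ ≤ 1 := by simp
  have hD0 : Denergy d ℓ (0 : Measure (EuclideanSpace ℝ (Fin d))) = 0 := by simp [Denergy]
  have hA : Denergy d ℓ ρ ≠ ⊤ := by
    intro htop
    have h := hmin 0 hzero_mass
    rw [htop, hD0] at h
    simp only [integral_zero_measure, mul_zero, EReal.coe_ennreal_top,
      EReal.top_sub_coe, EReal.coe_ennreal_zero, EReal.coe_zero, sub_zero] at h
    simp at h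
  rcases eq_or_ne (ρ Set.univ) 0 with hm0 | hm0
  · -- zero measure case
    have hρ0 : ρ = 0 := Measure.measure_univ_eq_zero.1 hm0
    subst hρ0
    refine ⟨0, le_refl 0, fun _ => rfl, by simp, ?_⟩
    intro ν hν hBν hIν
    haveI : IsFiniteMeasure ν := ⟨lt_of_le_of_lt hν one_lt_top⟩
    have hstar := star_lemma hK lam v 0 hzero_mass hmin hA ν hν hBν hIν
    have hu0 : ∀ x, uPot d ℓ (0 : Measure (EuclideanSpace ℝ (Fin d))) x = 0 := fun x => by simp [uPot]
    have h0 : (lam / 2) * ∫ x, v x ∂ν ≤ 0 := by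
      simp only [hD0, hu0, integral_zero_measure, lintegral_zero, ENNReal.toReal_zero,
        mul_zero, sub_zero, zero_sub] at hstar
      linarith
    have hnn : 0 ≤ᵐ[ν] fun x => (lam / 2) * v x :=
      Filter.Eventually.of_forall fun x => mul_nonneg (by linarith) (hv0 x)
    have hintv : Integrable (fun x => (lam / 2) * v x) ν :=
      (v.toBCF.integrable ν).const_mul _
    have hiz : ∫ x, (lam / 2) * v x ∂ν = 0 := by
      rw [integral_const_mul]
      have : 0 ≤ (lam / 2) * ∫ x, v x ∂ν :=
        mul_nonneg (by linarith) (integral_nonneg hv0)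
      linarith
    have hae0 : (fun x => (lam / 2) * v x) =ᵐ[ν] 0 :=
      (integral_eq_zero_iff_of_nonneg_ae hnn hintv).1 hiz
    filter_upwards [hae0] with x hx
    have hx0 : (lam / 2) * v x = 0 := hx
    rw [zero_add, hx0]
    exact EReal.coe_ennreal_nonneg _
  · -- positive mass case
    set m := ρ Set.univ with hmdef
    have hmtop : m ≠ ⊤ := (lt_of_le_of_lt hρ one_lt_top).ne
    have hmr : 0 < m.toReal := ENNReal.toReal_pos hm0 hmtop
    set Eρ := (Denergy d ℓ ρ).toReal - (lam / 2) * ∫ x, v x ∂ρ with hEdef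
    set c := Eρ / m.toReal with hcdef
    have hc : Eρ = c * m.toReal := (div_mul_cancel₀ _ hmr.ne').symm
    have hIρ : (∫⁻ x, uPot d ℓ ρ x ∂ρ) ≠ ⊤ := by
      rw [← denergy_eq hK]; exact hA
    -- c ≤ 0
    have hstar0 := star_lemma hK lam v ρ hρ hmin hA 0 hzero_mass (by rw [hD0]; simp) (by simp)
    simp only [integral_zero_measure, lintegral_zero_measure, ENNReal.toReal_zero,
      mul_zero, sub_zero] at hstar0
    have hEneg : Eρ ≤ 0 := hstar0
    have hcneg : c ≤ 0 := div_nonpos_of_nonpos_of_nonneg hEneg hmr.le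
    -- c = 0 when mass < 1
    have hczero : ρ Set.univ < 1 → c = 0 := by
      intro hlt
      have hinvtop : m⁻¹ ≠ ⊤ := ENNReal.inv_ne_top.2 hm0
      have hν1 : (m⁻¹ • ρ) Set.univ ≤ 1 := by
        rw [Measure.smul_apply, smul_eq_mul, ENNReal.inv_mul_cancel hm0 hmtop]
      have hBν : Denergy d ℓ (m⁻¹ • ρ) ≠ ⊤ := by
        rw [denergy_smul hK]; finiteness
      have hIν : (∫⁻ x, uPot d ℓ ρ x ∂(m⁻¹ • ρ)) ≠ ⊤ := by
        rw [lintegral_smul_measure, (smul_eq_mul (α := ℝ≥0∞))]; finiteness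
      have hstar1 := star_lemma hK lam v ρ hρ hmin hA (m⁻¹ • ρ) hν1 hBν hIν
      rw [lintegral_smul_measure, integral_smul_measure] at hstar1
      have hr1 : m.toReal < 1 := by
        rw [← ENNReal.toReal_one]
        exact (ENNReal.toReal_lt_toReal hmtop one_ne_top).2 hlt
      set r := m.toReal with hrdef
      have hstar1' : Eρ ≤ r⁻¹ * Eρ := by
        rw [(smul_eq_mul (α := ℝ≥0∞)), ENNReal.toReal_mul, ENNReal.toReal_inv, ← denergy_eq hK] at hstar1
        calc Eρ ≤ r⁻¹ * (Denergy d ℓ ρ).toReal - lam / 2 * (r⁻¹ • ∫ x, v x ∂ρ) := hstar1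
          _ = r⁻¹ * Eρ := by simp only [smul_eq_mul, hEdef]; ring
      have hmul : r * Eρ ≤ r * (r⁻¹ * Eρ) := mul_le_mul_of_nonneg_left hstar1' hmr.le
      rw [← mul_assoc, mul_inv_cancel₀ hmr.ne', one_mul] at hmul
      have hE0 : Eρ = 0 := by nlinarith
      rw [hcdef, hE0, zero_div]
    -- the variational inequality, pointwise a.e.
    have hae : ∀ ν : Measure (EuclideanSpace ℝ (Fin d)), ν Set.univ ≤ 1 → Denergy d ℓ ν ≠ ⊤ →
        (∫⁻ x, uPot d ℓ ρ x ∂ν) ≠ ⊤ →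
        ∀ᵐ x ∂ν, ((c + (lam / 2) * v x : ℝ) : EReal) ≤ ((uPot d ℓ ρ x : ℝ≥0∞) : EReal) :=
      fun ν hν hBν hIν => ae_ineq hK lam v ρ hρ hmin hA hm0 c hc ν hν hBν hIν
    refine ⟨c, hcneg, hczero, ?_, fun ν hν hBν hIν => hae ν hν hBν hIν⟩
    -- part (b): equality ρ-a.e.
    have haeρ := hae ρ hρ hA hIρ
    have hglt : ∀ᵐ x ∂ρ, uPot d ℓ ρ x < ⊤ := ae_lt_top (uPot_meas hK ρ) hIρ
    set h : EuclideanSpace ℝ (Fin d) → ℝ := fun x => (uPot d ℓ ρ x).toReal - (lam / 2) * v x with hhdef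
    have hintg : Integrable (fun x => (uPot d ℓ ρ x).toReal) ρ :=
      integrable_toReal_of_lintegral_ne_top (uPot_meas hK ρ).aemeasurable hIρ
    have hintv : Integrable (fun x => (lam / 2) * v x) ρ := intgρ.const_mul _
    have hinth : Integrable h ρ := hintg.sub hintv
    have hIntEq : ∫ x, h x ∂ρ = Eρ := by
      rw [hhdef]
      rw [integral_sub hintg hintv, integral_const_mul,
        integral_toReal (uPot_meas hK ρ).aemeasurable hglt, ← denergy_eq hK]
    have hge : ∀ᵐ x ∂ρ, c ≤ h x := by
      filter_upwards [haeρ, hglt] with x h1 h2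
      rw [coe_ennreal_eq_toReal h2.ne] at h1
      have : c + lam / 2 * v x ≤ (uPot d ℓ ρ x).toReal := by exact_mod_cast h1
      simp only [hhdef]
      linarith
    have hsub0 : ∫ x, (h x - c) ∂ρ = 0 := by
      rw [integral_sub hinth (integrable_const c), hIntEq, integral_const, hc]
      simp only [smul_eq_mul, Measure.real, ← hmdef]
      ring
    have haee : (fun x => h x - c) =ᵐ[ρ] 0 := by
      refine (integral_eq_zero_iff_of_nonneg_ae ?_ (hinth.sub (integrable_const c))).1 hsub0
      filter_upwards [hge] with x hx
      simp only [Pi.zero_apply, Pi.sub_apply]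
      linarith
    filter_upwards [haee, hglt] with x h1 h2
    have hx : h x - c = 0 := h1
    rw [coe_ennreal_eq_toReal h2.ne]
    have : (uPot d ℓ ρ x).toReal = c + lam / 2 * v x := by
      simp only [hhdef] at hx
      linarith
    exact_mod_cast this

end
end
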